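/- The class of (D − 1)η_n in the quotient group ℤⁿ / image(D² − 1) has order exactly 2^{n−1}: the element 2^{n−1}·(D − 1)η_n belongs to image(D² − 1), and for every integer m with 0 < m < 2^{n−1}, the element m·(D − 1)η_n does not belong to image(D² − 1). -/

import Mathlib

/-!
`ℤⁿ` is the abelian group of functions `Fin n → ℤ` (coordinates `1,…,n`
corresponding to indices `0,…,n-1`).  `shiftE n` is the shift operator `t`,
`(tη)(i) = η(i+1)` for `i < n` and `(tη)(n) = 0`, and
`DE n = 1 + t + t² + … + t^{n−1}`.
-/

noncomputable section

/-- The shift operator `t` on `ℤⁿ`. -/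
def shiftE (n : ℕ) : Module.End ℤ (Fin n → ℤ) :=
  (AddMonoidHom.mk' (fun (η : Fin n → ℤ) (i : Fin n) => if h : (i : ℕ) + 1 < n then η ⟨(i : ℕ) + 1, h⟩ else 0) (by
    intro a b
    funext i
    by_cases h : (i : ℕ) + 1 < n <;> simp [h])).toIntLinearMap

/-- The operator `D = 1 + t + t² + … + t^{n−1}` on `ℤⁿ`. -/
def DE (n : ℕ) : Module.End ℤ (Fin n → ℤ) := ∑ i ∈ Finset.range n, shiftE n ^ i

lemma shiftE_apply (n : ℕ) (η : Fin n → ℤ) (i : Fin n) :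
    shiftE n η i = if h : (i : ℕ) + 1 < n then η ⟨(i : ℕ) + 1, h⟩ else 0 := rfl

lemma shiftE_pow_apply (n k : ℕ) (η : Fin n → ℤ) (i : Fin n) :
    (shiftE n ^ k) η i = if h : (i : ℕ) + k < n then η ⟨(i : ℕ) + k, h⟩ else 0 := by
  induction k generalizing η i with
  | zero => simp [i.isLt]
  | succ k ih =>
      rw [pow_succ', Module.End.mul_apply, shiftE_apply]
      by_cases h : (i:ℕ) + 1 < n
      · rw [dif_pos h, ih]
        by_cases h2 : (i:ℕ) + 1 + k < n
        · rw [dif_pos (show ((⟨(i:ℕ)+1,h⟩ : Fin n):ℕ) + k < n from h2),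
            dif_pos (show (i:ℕ) + (k+1) < n from by omega)]
          exact congrArg η (Fin.ext (by simp; omega))
        · rw [dif_neg (show ¬(((⟨(i:ℕ)+1,h⟩ : Fin n):ℕ) + k < n) from h2),
            dif_neg (show ¬((i:ℕ) + (k+1) < n) from by omega)]
      · rw [dif_neg h, dif_neg (show ¬((i:ℕ) + (k+1) < n) from by omega)]

lemma shiftE_pow_n (n : ℕ) : shiftE n ^ n = 0 := by
  ext η i
  simp [shiftE_pow_apply, (by omega : ¬ ((i:ℕ) + n < n))]

lemma DE_mul_left (n : ℕ) : (1 - shiftE n) * DE n = 1 := by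
  have h := mul_geom_sum (shiftE n) n
  rw [DE, ← neg_sub (shiftE n) 1, neg_mul, h, shiftE_pow_n]
  simp

lemma DE_mul_right (n : ℕ) : DE n * (1 - shiftE n) = 1 := by
  have h := geom_sum_mul (shiftE n) n
  rw [DE, ← neg_sub (shiftE n) 1, mul_neg, h, shiftE_pow_n]
  simp

lemma sq_left (n : ℕ) : DE n ^ 2 * (1 - shiftE n) ^ 2 = 1 := by
  rw [sq, sq, mul_assoc, ← mul_assoc (DE n) (1 - shiftE n), DE_mul_right, one_mul, DE_mul_right]

lemma sq_right (n : ℕ) : (1 - shiftE n) ^ 2 * DE n ^ 2 = 1 := by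
  rw [sq, sq, mul_assoc, ← mul_assoc (1 - shiftE n) (DE n), DE_mul_left, one_mul, DE_mul_left]

lemma hBD (n : ℕ) : DE n ^ 2 - 1 = (1 - (1 - shiftE n) ^ 2) * DE n ^ 2 := by
  rw [sub_mul, one_mul, sq_right]

lemma B_apply (n : ℕ) (ζ : Fin n → ℤ) (j : Fin n) :
    ((1 - (1 - shiftE n) ^ 2 : Module.End ℤ (Fin n → ℤ)) ζ) j =
      2 * (if h : (j:ℕ) + 1 < n then ζ ⟨(j:ℕ)+1, h⟩ else 0)
        - (if h : (j:ℕ) + 2 < n then ζ ⟨(j:ℕ)+2, h⟩ else 0) := by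
  have e : (1 - (1 - shiftE n) ^ 2 : Module.End ℤ (Fin n → ℤ))
      = shiftE n + shiftE n - shiftE n ^ 2 := by noncomm_ring
  rw [e, LinearMap.sub_apply, LinearMap.add_apply, Pi.sub_apply, Pi.add_apply,
    shiftE_apply, shiftE_pow_apply]
  ring

lemma v_apply (n : ℕ) (hn : 2 ≤ n) (j : Fin n) :
    ((DE n - 1) (Pi.single (⟨n - 1, Nat.sub_lt (by omega) Nat.one_pos⟩ : Fin n) (1 : ℤ))) j
      = if (j:ℕ) = n - 1 then 0 else 1 := by
  have hj := j.isLt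
  rw [LinearMap.sub_apply, Module.End.one_apply, Pi.sub_apply, DE, LinearMap.sum_apply,
    Finset.sum_apply]
  have step : ∀ k ∈ Finset.range n,
      ((shiftE n ^ k) (Pi.single (⟨n - 1, by omega⟩ : Fin n) (1 : ℤ))) j
        = if k = n - 1 - (j:ℕ) then 1 else 0 := by
    intro k hk
    simp only [Finset.mem_range] at hk
    rw [shiftE_pow_apply]
    by_cases h : (j:ℕ) + k < n
    · rw [dif_pos h, Pi.single_apply]
      simp only [Fin.mk.injEq]
      split_ifs <;> first | rfl | omega
    · rw [dif_neg h, if_neg (by omega)]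
  rw [Finset.sum_congr rfl step, Finset.sum_ite_eq' (Finset.range n) (n - 1 - (j:ℕ))
    (fun _ => (1:ℤ)), if_pos (Finset.mem_range.mpr (by omega)), Pi.single_apply]
  simp only [Fin.mk.injEq, Fin.ext_iff]
  split_ifs <;> first | ring | omega


set_option maxHeartbeats 800000 in
/-- The class of `(D − 1)η_n` in `ℤⁿ / image(D² − 1)` has order exactly `2^{n−1}`:
`2^{n−1}·(D − 1)η_n ∈ image(D² − 1)`, while `m·(D − 1)η_n ∉ image(D² − 1)` for
`0 < m < 2^{n−1}`. -/
theorem order_of_D_sub_one_etaN (n : ℕ) (hn : 2 ≤ n) :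
    ((2 : ℤ) ^ (n - 1)) • (DE n - 1) (Pi.single (⟨n - 1, by omega⟩ : Fin n) (1 : ℤ)) ∈
        LinearMap.range (DE n ^ 2 - 1) ∧
    ∀ m : ℤ, 0 < m → m < 2 ^ (n - 1) →
      m • (DE n - 1) (Pi.single (⟨n - 1, by omega⟩ : Fin n) (1 : ℤ)) ∉
        LinearMap.range (DE n ^ 2 - 1) := by
  obtain ⟨N, rfl⟩ : ∃ N, n = N + 2 := ⟨n - 2, by omega⟩
  constructor
  · set ξ' : Fin (N+2) → ℤ :=
      fun j => if (j:ℕ) = 0 then 0 else 2 ^ (N+1) - 2 ^ ((j:ℕ) - 1) with hξ'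
    refine ⟨((1 - shiftE (N+2)) ^ 2 : Module.End ℤ (Fin (N+2) → ℤ)) ξ', ?_⟩
    have haux : (DE (N+2) ^ 2) (((1 - shiftE (N+2)) ^ 2 : Module.End ℤ (Fin (N+2) → ℤ)) ξ') = ξ' := by
      rw [← Module.End.mul_apply, sq_left, Module.End.one_apply]
    rw [hBD, Module.End.mul_apply, haux]
    funext j
    have hj := j.isLt
    rw [B_apply, Pi.smul_apply, v_apply _ (by omega), smul_eq_mul]
    simp only [show N+2-1 = N+1 from rfl]
    by_cases h2 : (j:ℕ) + 2 < N + 2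
    · rw [dif_pos (by omega : (j:ℕ) + 1 < N + 2), dif_pos h2, hξ']
      simp only []
      rw [if_neg (by omega : ¬ ((j:ℕ)+1 = 0)), if_neg (by omega : ¬ ((j:ℕ)+2 = 0)),
        if_neg (by omega : ¬ ((j:ℕ) = N + 1))]
      simp only [Nat.add_sub_cancel]
      have e1 : (j:ℕ) + 2 - 1 = (j:ℕ) + 1 := by omega
      rw [e1]
      ring
    · by_cases h1 : (j:ℕ) + 1 < N + 2
      · rw [dif_pos h1, dif_neg h2, hξ']
        simp only []
        rw [if_neg (by omega : ¬ ((j:ℕ)+1 = 0)), if_neg (by omega : ¬ ((j:ℕ) = N + 1))]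
        simp only [Nat.add_sub_cancel]
        have ej : (j:ℕ) = N := by omega
        rw [ej]
        ring
      · rw [dif_neg h1, dif_neg h2, if_pos (by omega : (j:ℕ) = N + 1)]
        ring
  · rintro m hm0 hm ⟨ξ, hξ⟩
    simp only [show N+2-1 = N+1 from rfl] at hm
    obtain ⟨ζ, hζ⟩ : ∃ ζ : Fin (N+2) → ℤ,
        (1 - (1 - shiftE (N+2)) ^ 2 : Module.End ℤ (Fin (N+2) → ℤ)) ζ
          = m • (DE (N+2) - 1) (Pi.single (⟨N + 2 - 1, by omega⟩ : Fin (N+2)) (1 : ℤ)) :=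
      ⟨(DE (N+2) ^ 2) ξ, by rw [← Module.End.mul_apply, ← hBD, hξ]⟩
    have hpt : ∀ (i : ℕ) (hi : i < N + 2),
        2 * (if h : i + 1 < N+2 then ζ ⟨i+1, h⟩ else 0)
          - (if h : i + 2 < N+2 then ζ ⟨i+2, h⟩ else 0)
          = m * (if i = N + 1 then 0 else 1) := by
      intro i hi
      have h0 := congrFun hζ ⟨i, hi⟩
      rw [B_apply, Pi.smul_apply, v_apply _ (by omega), smul_eq_mul,
        show N+2-1 = N+1 from rfl] at h0
      exact h0
    have claim : ∀ d : ℕ, d ≤ N →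
        2 ^ (d+1) * ζ ⟨N + 1 - d, by omega⟩ = m * (2 ^ (d+1) - 1) := by
      intro d
      induction d with
      | zero =>
          intro _
          have h := hpt N (by omega)
          split_ifs at h with a1 a2 a3 <;> try (exfalso; omega)
          have e1 : (⟨N + 1 - 0, by omega⟩ : Fin (N+2)) = ⟨N + 1, by omega⟩ :=
            Fin.ext (show N + 1 - 0 = N + 1 by omega)
          rw [e1]
          linear_combination h
      | succ d ih =>
          intro hd
          have ih' := ih (by omega)
          have h := hpt (N - 1 - d) (by omega)
          split_ifs at h with a1 a2 a3 <;> try (exfalso; omega)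
          have e1 : (⟨N - 1 - d + 1, by omega⟩ : Fin (N+2)) = ⟨N + 1 - (d+1), by omega⟩ :=
            Fin.ext (show N - 1 - d + 1 = N + 1 - (d+1) by omega)
          have e2 : (⟨N - 1 - d + 2, by omega⟩ : Fin (N+2)) = ⟨N + 1 - d, by omega⟩ :=
            Fin.ext (show N - 1 - d + 2 = N + 1 - d by omega)
          rw [e1, e2] at h
          linear_combination 2 ^ (d+1) * h + ih'
    have final := claim N le_rfl
    have hidx : ((⟨N + 1 - N, by omega⟩ : Fin (N+2))) = ⟨1, by omega⟩ :=
      Fin.ext (show N + 1 - N = 1 by omega)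
    rw [hidx] at final
    have hdvd : (2:ℤ) ^ (N+1) ∣ m :=
      ⟨m - ζ ⟨1, by omega⟩, by linear_combination final⟩
    have := Int.le_of_dvd hm0 hdvd
    omega
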